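/- Let $V$ be a finite-dimensional real Hilbert space with inner product $a$, subspaces $\mathcal{V}_0,\dots,\mathcal{V}_L \subseteq V$ with SPD forms $a_\ell$, and suppose: (strengthened Cauchy-Schwarz) $a(u_k,u_\ell) \leq \mathcal{E}_{\ell k} \sqrt{a(u_k,u_k)}\sqrt{a_\ell(u_\ell,u_\ell)}$ for all $k \leq \ell$ and $u_k \in \mathcal{V}_k$, $u_\ell \in \mathcal{V}_\ell$, where $\mathcal{E}$ is a symmetric nonnegative matrix; and (local stability) $a(u_\ell,u_\ell) \leq C_{\rm loc}\, a_\ell(u_\ell,u_\ell)$ for all $u_\ell \in \mathcal{V}_\ell$. Then for every decomposition $u = \sum_{\ell=0}^L u_\ell$ with $u_\ell \in \mathcal{V}_\ell$, $a(u,u) \leq 2 C_{\rm loc}^{1/2} \rho(\mathcal{E}) \sum_{\ell=0}^L a_\ell(u_\ell,u_\ell)$, where $\rho(\mathcal{E})$ is the spectral radius of $\mathcal{E}$. -/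

import Mathlib

open scoped RealInnerProductSpace

/-- Quadratic form of a real symmetric matrix is bounded by its spectral radius. -/
lemma quad_bound_aux {n : Type*} [Fintype n] [DecidableEq n]
    (M : Matrix n n ℝ) (hM : M.IsHermitian) (ρ : ℝ)
    (hρ : ρ = sSup ((fun μ => |μ|) '' spectrum ℝ (Matrix.toLin' M)))
    (x : EuclideanSpace ℝ n) :
    ⟪x, Matrix.toEuclideanLin M x⟫ ≤ ρ * ⟪x, x⟫ := by
  have hspec : spectrum ℝ (Matrix.toLin' M) = spectrum ℝ M :=
    AlgEquiv.spectrum_eq (Matrix.toLinAlgEquiv' : Matrix n n ℝ ≃ₐ[ℝ] _) M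
  have hspec2 : spectrum ℝ M = Set.range hM.eigenvalues :=
    Matrix.IsHermitian.spectrum_real_eq_range_eigenvalues hM
  have hev : ∀ i, |hM.eigenvalues i| ≤ ρ := by
    intro i
    rw [hρ, hspec, hspec2]
    exact le_csSup ((Set.finite_range hM.eigenvalues).image _).bddAbove ⟨_, ⟨i, rfl⟩, rfl⟩
  set B := hM.eigenvectorBasis with hB
  have hsym : (Matrix.toEuclideanLin M).IsSymmetric :=
    Matrix.isHermitian_iff_isSymmetric.mp hM
  have hBi : ∀ i, Matrix.toEuclideanLin M (B i) = hM.eigenvalues i • B i := by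
    intro i
    ext j
    have := congrFun (hM.mulVec_eigenvectorBasis i) j
    simpa [Matrix.toEuclideanLin_apply] using this
  have key : ⟪x, Matrix.toEuclideanLin M x⟫
      = ∑ i, hM.eigenvalues i * (⟪x, B i⟫ * ⟪B i, x⟫) := by
    rw [← B.sum_inner_mul_inner x (Matrix.toEuclideanLin M x)]
    refine Finset.sum_congr rfl fun i _ => ?_
    rw [← hsym (B i) x, hBi i, real_inner_smul_left]
    ring
  rw [key, ← B.sum_inner_mul_inner x x, Finset.mul_sum]
  refine Finset.sum_le_sum fun i _ => ?_
  have h1 : 0 ≤ ⟪x, B i⟫ * ⟪B i, x⟫ := by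
    rw [real_inner_comm (B i) x]; exact mul_self_nonneg _
  exact mul_le_mul_of_nonneg_right ((le_abs_self _).trans (hev i)) h1

/-- Strengthened Cauchy-Schwarz plus local stability imply the upper bound
`a(u,u) ≤ 2 √C_loc ρ(ℰ) ∑ aℓ(uℓ,uℓ)` for any decomposition `u = ∑ uℓ`. -/
theorem stmt7 {V : Type*} [NormedAddCommGroup V] [InnerProductSpace ℝ V] (L : ℕ)
    (𝒱 : Fin (L+1) → Submodule ℝ V)
    (a : Fin (L+1) → V → V → ℝ)
    (hsymm : ∀ ℓ u v, a ℓ u v = a ℓ v u)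
    (hpos : ∀ ℓ, ∀ u ∈ 𝒱 ℓ, u ≠ 0 → 0 < a ℓ u u)
    (ℰ : Matrix (Fin (L+1)) (Fin (L+1)) ℝ) (hE : ℰ.IsSymm)
    (hEnn : ∀ k l, 0 ≤ ℰ k l)
    (ρ : ℝ) (hρ : ρ = sSup ((fun μ => |μ|) '' spectrum ℝ (Matrix.toLin' ℰ)))
    (Cloc : ℝ) (hCloc : 0 ≤ Cloc)
    (hCS : ∀ k ℓ : Fin (L+1), k ≤ ℓ → ∀ uk ∈ 𝒱 k, ∀ ul ∈ 𝒱 ℓ,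
        ⟪uk, ul⟫ ≤ ℰ ℓ k * Real.sqrt ⟪uk, uk⟫ * Real.sqrt (a ℓ ul ul))
    (hloc : ∀ ℓ, ∀ u ∈ 𝒱 ℓ, ⟪u, u⟫ ≤ Cloc * a ℓ u u)
    (u : V) (w : Fin (L+1) → V) (hw : ∀ ℓ, w ℓ ∈ 𝒱 ℓ) (hu : u = ∑ ℓ, w ℓ) :
    ⟪u, u⟫ ≤ 2 * Real.sqrt Cloc * ρ * ∑ ℓ, a ℓ (w ℓ) (w ℓ) := by
  rcases eq_or_lt_of_le hCloc with hC0 | hCpos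
  · -- Cloc = 0 : every w ℓ = 0
    have hw0 : ∀ ℓ, w ℓ = 0 := by
      intro ℓ
      have h := hloc ℓ (w ℓ) (hw ℓ)
      rw [← hC0, zero_mul] at h
      exact inner_self_eq_zero.mp (le_antisymm h real_inner_self_nonneg)
    have hu0 : u = 0 := by
      rw [hu]; exact Finset.sum_eq_zero fun ℓ _ => hw0 ℓ
    rw [hu0, ← hC0]
    simp
  · -- Cloc > 0
    have hA : ∀ ℓ, 0 ≤ a ℓ (w ℓ) (w ℓ) := by
      intro ℓ
      have h1 : (0:ℝ) ≤ ⟪w ℓ, w ℓ⟫ := real_inner_self_nonneg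
      have h2 := hloc ℓ (w ℓ) (hw ℓ)
      nlinarith
    set x : EuclideanSpace ℝ (Fin (L+1)) := WithLp.toLp 2 (fun ℓ => Real.sqrt (a ℓ (w ℓ) (w ℓ))) with hxdef
    have hxnn : ∀ ℓ, 0 ≤ x ℓ := fun ℓ => Real.sqrt_nonneg _
    have hxsq : ∀ ℓ, x ℓ * x ℓ = a ℓ (w ℓ) (w ℓ) := fun ℓ => Real.mul_self_sqrt (hA ℓ)
    -- pairwise bound
    have hb : ∀ k ℓ : Fin (L+1), k ≤ ℓ →
        ⟪w k, w ℓ⟫ ≤ Real.sqrt Cloc * (ℰ ℓ k * x k * x ℓ) := by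
      intro k ℓ hkl
      have h1 := hCS k ℓ hkl (w k) (hw k) (w ℓ) (hw ℓ)
      have h2 : Real.sqrt ⟪w k, w k⟫ ≤ Real.sqrt Cloc * x k := by
        calc Real.sqrt ⟪w k, w k⟫ ≤ Real.sqrt (Cloc * a k (w k) (w k)) :=
              Real.sqrt_le_sqrt (hloc k (w k) (hw k))
          _ = Real.sqrt Cloc * x k := Real.sqrt_mul hCloc _
      calc ⟪w k, w ℓ⟫ ≤ ℰ ℓ k * Real.sqrt ⟪w k, w k⟫ * x ℓ := h1
        _ ≤ ℰ ℓ k * (Real.sqrt Cloc * x k) * x ℓ :=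
            mul_le_mul_of_nonneg_right (mul_le_mul_of_nonneg_left h2 (hEnn ℓ k)) (hxnn ℓ)
        _ = Real.sqrt Cloc * (ℰ ℓ k * x k * x ℓ) := by ring
    have hpair : ∀ k ℓ : Fin (L+1),
        ⟪w k, w ℓ⟫ ≤ Real.sqrt Cloc * (ℰ ℓ k * x k * x ℓ) := by
      intro k ℓ
      rcases le_total k ℓ with h | h
      · exact hb k ℓ h
      · have := hb ℓ k h
        rw [real_inner_comm]
        calc ⟪w ℓ, w k⟫ ≤ Real.sqrt Cloc * (ℰ k ℓ * x ℓ * x k) := this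
          _ = Real.sqrt Cloc * (ℰ ℓ k * x k * x ℓ) := by rw [hE.apply]; ring
    -- total sum bound
    have hsum : ⟪u, u⟫ ≤ Real.sqrt Cloc * ∑ ℓ, ∑ k, ℰ ℓ k * x k * x ℓ := by
      have : ⟪u, u⟫ = ∑ k, ∑ ℓ, ⟪w k, w ℓ⟫ := by
        rw [hu, sum_inner]
        exact Finset.sum_congr rfl fun k _ => inner_sum _ _ _
      rw [this, Finset.mul_sum]
      rw [Finset.sum_comm]
      refine Finset.sum_le_sum fun ℓ _ => ?_
      rw [Finset.mul_sum]
      exact Finset.sum_le_sum fun k _ => hpair k ℓ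
    -- identify with inner product on EuclideanSpace
    have hEH : ℰ.IsHermitian := by
      rw [Matrix.IsHermitian]; ext i j
      simpa using (hE.apply j i).symm
    have hquad := quad_bound_aux ℰ hEH ρ hρ x
    have hinner1 : ⟪x, Matrix.toEuclideanLin ℰ x⟫ = ∑ ℓ, ∑ k, ℰ ℓ k * x k * x ℓ := by
      simp only [PiLp.inner_apply, RCLike.inner_apply, starRingEnd_apply, star_trivial,
        Matrix.toEuclideanLin_apply, Matrix.mulVec, dotProduct]
      refine Finset.sum_congr rfl fun ℓ _ => ?_
      rw [Finset.sum_mul]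
    have hinner2 : ⟪x, x⟫ = ∑ ℓ, a ℓ (w ℓ) (w ℓ) := by
      simp only [PiLp.inner_apply, RCLike.inner_apply, starRingEnd_apply, star_trivial]
      exact Finset.sum_congr rfl fun ℓ _ => hxsq ℓ
    rw [hinner1, hinner2] at hquad
    have hmain : ⟪u, u⟫ ≤ Real.sqrt Cloc * (ρ * ∑ ℓ, a ℓ (w ℓ) (w ℓ)) :=
      hsum.trans (mul_le_mul_of_nonneg_left hquad (Real.sqrt_nonneg _))
    have hnn : (0:ℝ) ≤ ⟪u, u⟫ := real_inner_self_nonneg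
    nlinarith
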